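/- arXiv:2109.06269 — 2 statements merged into one kernel-verified Lean document; each statement's English description precedes it below -/
import Mathlib

section
/- Let G be a connected graph of order n with s distinct adjacency eigenvalues, minimum degree δ(G), and let p be a positive integer with p ≤ δ(G) and s ≥ n − δ(G) + p. Then for every adjacency eigenvalue λ with multiplicity m_G(λ), the p-domination number satisfies γ_p(G) ≤ n − m_G(λ). -/
open Matrix SimpleGraph

variable {V : Type*} [Fintype V] [DecidableEq V]

/-- Adjacency matrix of a simple graph over ℝ (classically decidable). -/
noncomputable def adjM (G : SimpleGraph V) : Matrix V V ℝ :=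
  letI := Classical.decRel G.Adj
  G.adjMatrix ℝ

/-- Multiplicity of `lam` as an adjacency eigenvalue of `G`. -/
noncomputable def eigMult (G : SimpleGraph V) (lam : ℝ) : ℕ :=
  Module.finrank ℝ (LinearMap.ker (Matrix.toLin' (adjM G - lam • (1 : Matrix V V ℝ))))

/-- `D` is a dominating set of `G`. -/
def IsDomSet (G : SimpleGraph V) (D : Finset V) : Prop :=
  ∀ v ∉ D, ∃ u ∈ D, G.Adj v u

/-- Domination number. -/
noncomputable def domNum (G : SimpleGraph V) : ℕ :=
  sInf {k | ∃ D : Finset V, IsDomSet G D ∧ D.card = k}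

/-- `D` is a total dominating set of `G`. -/
def IsTotalDomSet (G : SimpleGraph V) (D : Finset V) : Prop :=
  ∀ v : V, ∃ u ∈ D, G.Adj v u

/-- Total domination number. -/
noncomputable def totalDomNum (G : SimpleGraph V) : ℕ :=
  sInf {k | ∃ D : Finset V, IsTotalDomSet G D ∧ D.card = k}

/-- `D` is a `p`-dominating set of `G`. -/
def IsPDomSet (G : SimpleGraph V) (p : ℕ) (D : Finset V) : Prop :=
  ∀ v ∉ D, p ≤ (G.neighborSet v ∩ ↑D).ncard

/-- `p`-domination number. -/
noncomputable def pDomNum (G : SimpleGraph V) (p : ℕ) : ℕ :=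
  sInf {k | ∃ D : Finset V, IsPDomSet G p D ∧ D.card = k}

/-- `X` is a star set for the eigenvalue `lam` of `G`: `lam` is an eigenvalue of `G`
with multiplicity `|X|`, and `lam` is not an eigenvalue of the induced subgraph `G - X`. -/
def IsStarSet (G : SimpleGraph V) (lam : ℝ) (X : Finset V) : Prop :=
  0 < eigMult G lam ∧ eigMult G lam = X.card ∧
    ∀ α : {v : V // v ∉ X} → ℝ,
      (Matrix.of fun i j : {v : V // v ∉ X} => adjM G i.1 j.1).mulVec α = lam • α → α = 0

/-- Minimum degree. -/
noncomputable def minDeg (G : SimpleGraph V) : ℕ :=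
  sInf {d | ∃ v : V, (G.neighborSet v).ncard = d}

/-- Number of distinct adjacency eigenvalues of `G`. -/
noncomputable def numEigs (G : SimpleGraph V) : ℕ :=
  {lam : ℝ | 0 < eigMult G lam}.ncard

lemma eigMult_eq_finrank (G : SimpleGraph V) (μ : ℝ) :
    eigMult G μ = Module.finrank ℝ (Module.End.eigenspace (Matrix.toLin' (adjM G)) μ) := by
  have h : Matrix.toLin' (adjM G - μ • (1 : Matrix V V ℝ))
      = Matrix.toLin' (adjM G) - μ • (1 : Module.End ℝ (V → ℝ)) := by
    rw [map_sub, _root_.map_smul, Matrix.toLin'_one]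
    rfl
  rw [eigMult, Module.End.eigenspace_def, h]

lemma eigMult_pos_iff (G : SimpleGraph V) (μ : ℝ) :
    0 < eigMult G μ ↔ Module.End.eigenspace (Matrix.toLin' (adjM G)) μ ≠ ⊥ := by
  rw [eigMult_eq_finrank, Nat.pos_iff_ne_zero, ne_eq, Submodule.finrank_eq_zero]

lemma mult_add_numEigs (G : SimpleGraph V) (lam : ℝ) :
    eigMult G lam + numEigs G ≤ Fintype.card V + 1 := by
  classical
  set f := Matrix.toLin' (adjM G) with hf
  set S : Set ℝ := {μ | μ ≠ lam ∧ Module.End.eigenspace f μ ≠ ⊥} with hSdef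
  haveI : Fintype {μ : ℝ // Module.End.eigenspace f μ ≠ ⊥} :=
    (Module.End.eigenspaces_iSupIndep f).fintypeNeBotOfFiniteDimensional
  have hfin : {μ : ℝ | Module.End.eigenspace f μ ≠ ⊥}.Finite := by
    have h : Finite {μ : ℝ // Module.End.eigenspace f μ ≠ ⊥} := Finite.of_fintype _
    exact Set.finite_coe_iff.mp h
  have hSfin : S.Finite := hfin.subset (fun μ hμ => hμ.2)
  haveI : Fintype S := hSfin.fintype
  have hv : ∀ μ : S, ∃ x, Module.End.HasEigenvector f μ.1 x := fun μ =>
    Module.End.HasEigenvalue.exists_hasEigenvector μ.2.2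
  choose v hv using hv
  have li : LinearIndependent ℝ v := Module.End.eigenvectors_linearIndependent f S v hv
  set W := Submodule.span ℝ (Set.range v) with hWdef
  have hW1 : S.ncard ≤ Module.finrank ℝ W := by
    rw [show S.ncard = Fintype.card S by rw [← Nat.card_eq_fintype_card, Nat.card_coe_set_eq]]
    rw [← finrank_span_eq_card li]
  have hW2 : Disjoint (Module.End.eigenspace f lam) W := by
    refine (Module.End.eigenspaces_iSupIndep f lam).mono_right ?_
    rw [hWdef, Submodule.span_le]
    rintro x ⟨μ, rfl⟩
    exact Submodule.mem_iSup_of_mem μ.1 (Submodule.mem_iSup_of_mem μ.2.1 (hv μ).1)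
  have hsum : Module.finrank ℝ (Module.End.eigenspace f lam) + Module.finrank ℝ W
      ≤ Fintype.card V := by
    have h1 := Submodule.finrank_sup_add_finrank_inf_eq (Module.End.eigenspace f lam) W
    rw [hW2.eq_bot, finrank_bot, add_zero] at h1
    have h2 := Submodule.finrank_le (Module.End.eigenspace f lam ⊔ W)
    rw [Module.finrank_pi] at h2
    omega
  have hnum : numEigs G ≤ S.ncard + 1 := by
    have hsub : {μ : ℝ | 0 < eigMult G μ} ⊆ insert lam S := by
      intro μ hμ
      rcases eq_or_ne μ lam with h | h
      · exact Set.mem_insert_iff.mpr (Or.inl h)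
      · exact Set.mem_insert_iff.mpr (Or.inr ⟨h, (eigMult_pos_iff G μ).mp hμ⟩)
    calc numEigs G ≤ (insert lam S).ncard := Set.ncard_le_ncard hsub (hSfin.insert lam)
      _ ≤ S.ncard + 1 := Set.ncard_insert_le _ _
  rw [eigMult_eq_finrank, ← hf]
  omega

theorem stmt_11 (G : SimpleGraph V) (hG : G.Connected) (p : ℕ) (hp : 0 < p)
    (hpδ : p ≤ minDeg G) (hs : Fintype.card V - minDeg G + p ≤ numEigs G)
    (lam : ℝ) (heig : 0 < eigMult G lam) :
    pDomNum G p ≤ Fintype.card V - eigMult G lam := by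
  classical
  set n := Fintype.card V with hn
  set m := eigMult G lam with hm
  set δ := minDeg G with hδ
  have hkey : m + numEigs G ≤ n + 1 := mult_add_numEigs G lam
  have hmn : m ≤ n := by
    have h := Submodule.finrank_le (LinearMap.ker (Matrix.toLin' (adjM G - lam • (1 : Matrix V V ℝ))))
    rwa [Module.finrank_pi] at h
  have hn1 : 1 ≤ n := by omega
  obtain ⟨v0⟩ : Nonempty V := Fintype.card_pos_iff.mp hn1
  have hδ_le : ∀ w : V, δ ≤ (G.neighborSet w).ncard := fun w => Nat.sInf_le ⟨w, rfl⟩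
  have huniv : (Set.univ : Set V).ncard = n := by
    rw [Set.ncard_univ, Nat.card_eq_fintype_card]
  have hδn : δ + 1 ≤ n := by
    have hsub : G.neighborSet v0 ⊆ Set.univ \ {v0} := fun x hx =>
      ⟨trivial, fun h => G.irrefl ((Set.mem_singleton_iff.mp h) ▸ hx)⟩
    have h1 : (G.neighborSet v0).ncard ≤ n - 1 := by
      calc (G.neighborSet v0).ncard ≤ (Set.univ \ {v0}).ncard :=
            Set.ncard_le_ncard hsub (Set.toFinite _)
        _ = n - 1 := by
            rw [Set.ncard_diff (Set.singleton_subset_iff.mpr (Set.mem_univ v0)) (Set.toFinite _),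
              huniv, Set.ncard_singleton]
    have h2 := hδ_le v0
    omega
  obtain ⟨D, -, hD⟩ := Finset.exists_subset_card_eq
    (show n - m ≤ (Finset.univ : Finset V).card by rw [Finset.card_univ, ← hn]; omega)
  have hpd : IsPDomSet G p D := by
    intro w hw
    have h1 : δ ≤ (G.neighborSet w).ncard := hδ_le w
    have h2 := Set.ncard_inter_add_ncard_diff_eq_ncard (G.neighborSet w) ↑D (Set.toFinite _)
    have h3 : (G.neighborSet w \ ↑D).ncard ≤ n - D.card - 1 := by
      have hsub : G.neighborSet w \ ↑D ⊆ (Set.univ \ ↑D) \ {w} := by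
        rintro x ⟨hx1, hx2⟩
        exact ⟨⟨trivial, hx2⟩, fun h => G.irrefl ((Set.mem_singleton_iff.mp h) ▸ hx1)⟩
      have hcard : ((Set.univ \ ↑D) \ {w}).ncard = n - D.card - 1 := by
        have hwmem : w ∈ (Set.univ \ (↑D : Set V)) := ⟨trivial, by simpa using hw⟩
        rw [Set.ncard_diff_singleton_of_mem hwmem,
          Set.ncard_diff (Set.subset_univ _) (Set.toFinite _), huniv, Set.ncard_coe_finset]
      calc (G.neighborSet w \ ↑D).ncard ≤ ((Set.univ \ ↑D) \ {w}).ncard :=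
            Set.ncard_le_ncard hsub (Set.toFinite _)
        _ = n - D.card - 1 := hcard
    omega
  exact Nat.sInf_le (show (n - m) ∈ {k | ∃ D : Finset V, IsPDomSet G p D ∧ D.card = k} from ⟨D, hpd, hD⟩)
end

section
/- Let λ be an eigenvalue of a connected graph G, and let K be a connected induced subgraph of G not having λ as an eigenvalue. Then G has a connected star complement for λ containing K, i.e., there is a star set X for λ with K ⊆ G−X and G−X connected. -/
set_option linter.unusedSectionVars false
set_option maxHeartbeats 1600000


open Matrix SimpleGraph

variable {V : Type*} [Fintype V] [DecidableEq V]

section StarComplAux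

lemma adjM_of_adj {G : SimpleGraph V} {i j : V} (h : G.Adj i j) : adjM G i j = 1 := by
  letI := Classical.decRel G.Adj
  simp [adjM, h]

lemma adjM_of_not_adj {G : SimpleGraph V} {i j : V} (h : ¬ G.Adj i j) : adjM G i j = 0 := by
  letI := Classical.decRel G.Adj
  simp [adjM, h]

lemma adjM_symm (G : SimpleGraph V) (i j : V) : adjM G i j = adjM G j i := by
  by_cases h : G.Adj i j
  · rw [adjM_of_adj h, adjM_of_adj h.symm]
  · rw [adjM_of_not_adj h, adjM_of_not_adj (fun h' => h h'.symm)]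

lemma adjM_transpose (G : SimpleGraph V) : (adjM G)ᵀ = adjM G := by
  ext i j; exact adjM_symm G j i


def Pfree (G : SimpleGraph V) (lam : ℝ) (Z : Finset V) : Prop :=
  ∀ x : V → ℝ, (∀ i ∉ Z, x i = 0) → (∀ i ∈ Z, (adjM G).mulVec x i = lam * x i) → x = 0

lemma sum_pred_eq {p : V → Prop} [DecidablePred p] (instF : Fintype {v : V // p v})
    (f : V → ℝ)
    (hf : ∀ v, ¬ p v → f v = 0) : ∑ v : V, f v = ∑ v : {v : V // p v}, f v.1 := by
  rw [← Finset.sum_subtype (Finset.univ.filter p) (by simp) f]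
  exact (Finset.sum_filter_of_ne (fun v _ hv => by by_contra hp; exact hv (hf v hp))).symm

lemma Pfree_iff_pred (G : SimpleGraph V) (lam : ℝ) (Z : Finset V)
    (p : V → Prop) [DecidablePred p] [instF : Fintype {v : V // p v}] (hp : ∀ v, p v ↔ v ∈ Z) :
    Pfree G lam Z ↔ ∀ α : {v : V // p v} → ℝ,
      (Matrix.of fun i j : {v : V // p v} => adjM G i.1 j.1).mulVec α = lam • α → α = 0 := by
  constructor
  · intro h α hα
    set x : V → ℝ := fun v => if h : p v then α ⟨v, h⟩ else 0 with hx
    have hxv : ∀ v : {v // p v}, x v.1 = α v := by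
      intro v; simp only [hx, dif_pos v.2]
    have hx0 : x = 0 := by
      apply h
      · intro i hi
        simp only [hx]; rw [dif_neg]; exact fun hpv => hi ((hp i).1 hpv)
      · intro i hi
        have hpi : p i := (hp i).2 hi
        have : (adjM G).mulVec x i
            = ((Matrix.of fun i j : {v : V // p v} => adjM G i.1 j.1).mulVec α) ⟨i, hpi⟩ := by
          simp only [Matrix.mulVec, dotProduct, Matrix.of_apply]
          rw [sum_pred_eq (p := p) instF (fun v => adjM G i v * x v)
            (fun v hv => by show adjM G i v * x v = 0; simp [hx, dif_neg hv])]
          exact Finset.sum_congr rfl (fun v _ => by rw [hxv])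
        rw [this, hα]
        simp only [Pi.smul_apply, smul_eq_mul]
        rw [hxv ⟨i, hpi⟩]
    funext v
    rw [← hxv v, hx0]; rfl
  · intro h x hsupp heig
    set α : {v : V // p v} → ℝ := fun v => x v.1 with hα
    have h0 : α = 0 := by
      apply h
      funext i
      have : ((Matrix.of fun i j : {v : V // p v} => adjM G i.1 j.1).mulVec α) i
          = (adjM G).mulVec x i.1 := by
        simp only [Matrix.mulVec, dotProduct, Matrix.of_apply]
        rw [sum_pred_eq (p := p) instF (fun v => adjM G i.1 v * x v)
          (fun v hv => by show adjM G i.1 v * x v = 0; rw [hsupp v (fun hvZ => hv ((hp v).2 hvZ)), mul_zero])]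
      rw [this, heig i.1 ((hp i.1).1 i.2)]
      simp [hα]
    funext v
    by_cases hpv : p v
    · have := congrFun h0 ⟨v, hpv⟩; simpa [hα] using this
    · exact hsupp v (fun hvZ => hpv ((hp v).2 hvZ))


lemma mulVec_split (Y : Finset V) (M : Matrix V V ℝ) (x : V → ℝ) (i : V) :
    M.mulVec x i = (∑ v : {v : V // v ∈ Y}, M i v.1 * x v.1)
      + M.mulVec (fun v => if v ∈ Y then 0 else x v) i := by
  simp only [Matrix.mulVec, dotProduct]
  have e1 : ∑ v : V, (if v ∈ Y then M i v * x v else 0)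
      = ∑ v : {v : V // v ∈ Y}, M i v.1 * x v.1 := by
    rw [sum_pred_eq (p := (· ∈ Y)) (Finset.Subtype.fintype Y) _ (fun v hv => if_neg hv)]
    exact Finset.sum_congr rfl fun v _ => if_pos v.2
  rw [← e1, ← Finset.sum_add_distrib]
  apply Finset.sum_congr rfl
  intro v _
  by_cases h : v ∈ Y <;> simp [h]

def IsExt (G : SimpleGraph V) (lam : ℝ) (Y : Finset V) (ξ x : V → ℝ) : Prop :=
  (∀ v ∉ Y, x v = ξ v) ∧ (∀ i ∈ Y, (adjM G).mulVec x i = lam * x i)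

lemma ext_unique {G : SimpleGraph V} {lam : ℝ} {Y : Finset V} (hPY : Pfree G lam Y)
    {ξ x₁ x₂ : V → ℝ} (h1 : IsExt G lam Y ξ x₁) (h2 : IsExt G lam Y ξ x₂) : x₁ = x₂ := by
  have := hPY (x₁ - x₂) (fun i hi => by simp [h1.1 i hi, h2.1 i hi])
    (fun i hi => by
      simp only [Matrix.mulVec_sub, Pi.sub_apply, h1.2 i hi, h2.2 i hi]; ring)
  funext v; have := congrFun this v; simpa [sub_eq_zero] using this

lemma ext_exists {G : SimpleGraph V} {lam : ℝ} {Y : Finset V} (hPY : Pfree G lam Y)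
    (ξ : V → ℝ) : ∃ x : V → ℝ, IsExt G lam Y ξ x := by
  classical
  set C : Matrix {v : V // v ∈ Y} {v : V // v ∈ Y} ℝ :=
    Matrix.of fun i j => adjM G i.1 j.1 with hC
  have key : ∀ (y : {v : V // v ∈ Y} → ℝ) (i : V) (hi : i ∈ Y),
      (adjM G).mulVec (fun v => if h : v ∈ Y then y ⟨v, h⟩ else 0) i
        = C.mulVec y ⟨i, hi⟩ := by
    intro y i hi
    rw [mulVec_split Y]
    have h2 : (fun v => if v ∈ Y then 0 else if h : v ∈ Y then y ⟨v, h⟩ else 0)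
        = (0 : V → ℝ) := by
      funext v; by_cases h : v ∈ Y <;> simp [h]
    rw [h2, Matrix.mulVec_zero]; simp only [Pi.zero_apply, add_zero]
    simp only [Matrix.mulVec, dotProduct, hC, Matrix.of_apply]
    exact Finset.sum_congr rfl (fun v _ => by rw [dif_pos v.2])
  have hinj : Function.Injective (Matrix.toLin' (C - lam • 1)) := by
    rw [← LinearMap.ker_eq_bot, LinearMap.ker_eq_bot']
    intro y hy
    have hy' : (C - lam • 1).mulVec y = 0 := by rwa [Matrix.toLin'_apply] at hy
    rw [Matrix.sub_mulVec, Matrix.smul_mulVec, Matrix.one_mulVec, sub_eq_zero] at hy'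
    set x₀ : V → ℝ := fun v => if h : v ∈ Y then y ⟨v, h⟩ else 0 with hx₀
    have : x₀ = 0 := by
      apply hPY
      · intro i hi; simp [hx₀, dif_neg hi]
      · intro i hi
        rw [key y i hi, hy']
        simp [hx₀, dif_pos hi]
    funext v
    have := congrFun this v.1
    simpa [hx₀, dif_pos v.2] using this
  have hsurj := (LinearMap.injective_iff_surjective).1 hinj
  obtain ⟨y, hy⟩ := hsurj
    (fun i : {v : V // v ∈ Y} =>
      lam • (0 : ℝ) - ((adjM G).mulVec (fun v => if v ∈ Y then 0 else ξ v) i.1))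
  rw [Matrix.toLin'_apply] at hy
  refine ⟨fun v => if h : v ∈ Y then y ⟨v, h⟩ else ξ v, fun v hv => dif_neg hv, ?_⟩
  intro i hi
  set x : V → ℝ := fun v => if h : v ∈ Y then y ⟨v, h⟩ else ξ v with hx
  rw [mulVec_split Y]
  have h1 : (∑ v : {v : V // v ∈ Y}, adjM G i v.1 * x v.1) = C.mulVec y ⟨i, hi⟩ := by
    simp only [Matrix.mulVec, dotProduct, hC, Matrix.of_apply]
    exact Finset.sum_congr rfl (fun v _ => by simp [hx, dif_pos v.2])
  have h2 : (fun v => if v ∈ Y then 0 else x v) = (fun v => if v ∈ Y then 0 else ξ v) := by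
    funext v; by_cases h : v ∈ Y <;> simp [hx, h]
  rw [h1, h2]
  have := congrFun hy ⟨i, hi⟩
  rw [Matrix.sub_mulVec, Matrix.smul_mulVec, Matrix.one_mulVec] at this
  have hxi : x i = y ⟨i, hi⟩ := dif_pos hi
  simp only [Pi.sub_apply, Pi.smul_apply, smul_eq_mul, mul_zero] at this
  rw [hxi]
  linarith [this]


noncomputable def ind (v : V) : V → ℝ := fun u => if u = v then 1 else 0

lemma ind_self (v : V) : ind v v = 1 := if_pos rfl
lemma ind_ne {u v : V} (h : u ≠ v) : ind v u = 0 := if_neg h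

lemma sum_split (Y : Finset V) (f : V → ℝ) :
    ∑ i : V, f i = (∑ i : {v : V // v ∈ Y}, f i.1) + ∑ i : V, (if i ∈ Y then 0 else f i) := by
  have e1 : ∑ v : V, (if v ∈ Y then f v else 0)
      = ∑ v : {v : V // v ∈ Y}, f v.1 := by
    rw [sum_pred_eq (p := (· ∈ Y)) (Finset.Subtype.fintype Y) _ (fun v hv => if_neg hv)]
    exact Finset.sum_congr rfl fun v _ => if_pos v.2
  rw [← e1, ← Finset.sum_add_distrib]
  apply Finset.sum_congr rfl
  intro v _
  by_cases h : v ∈ Y <;> simp [h]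

lemma bilin_symm (G : SimpleGraph V) (x y : V → ℝ) :
    ∑ i : V, x i * (adjM G).mulVec y i = ∑ i : V, y i * (adjM G).mulVec x i := by
  simp only [Matrix.mulVec, dotProduct, Finset.mul_sum]
  rw [Finset.sum_comm]
  apply Finset.sum_congr rfl; intro a _
  apply Finset.sum_congr rfl; intro b _
  rw [adjM_symm G b a]; ring

lemma ext_symm {G : SimpleGraph V} {lam : ℝ} {Y : Finset V} {u v : V}
    (hu : u ∉ Y) (hv : v ∉ Y) {xu xv : V → ℝ}
    (hxu : IsExt G lam Y (ind u) xu) (hxv : IsExt G lam Y (ind v) xv) :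
    (adjM G).mulVec xv u = (adjM G).mulVec xu v := by
  have key : ∀ (a b : V) (ha : a ∉ Y) (xa xb : V → ℝ),
      IsExt G lam Y (ind a) xa → IsExt G lam Y (ind b) xb →
      ∑ i : V, xa i * (adjM G).mulVec xb i
        = lam * (∑ i : {w : V // w ∈ Y}, xa i.1 * xb i.1) + (adjM G).mulVec xb a := by
    intro a b ha xa xb hxa hxb
    rw [sum_split Y]
    congr 1
    · rw [Finset.mul_sum]
      exact Finset.sum_congr rfl (fun i _ => by rw [hxb.2 i.1 i.2]; ring)
    · rw [Finset.sum_eq_single a]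
      · rw [if_neg ha, hxa.1 a ha, ind_self, one_mul]
      · intro i _ hia
        by_cases hiY : i ∈ Y
        · rw [if_pos hiY]
        · rw [if_neg hiY, hxa.1 i hiY, ind_ne hia, zero_mul]
      · intro h; exact absurd (Finset.mem_univ a) h
  have h1 := key u v hu xu xv hxu hxv
  have h2 := key v u hv xv xu hxv hxu
  have h3 := bilin_symm G xu xv
  have h4 : (∑ i : {w : V // w ∈ Y}, xu i.1 * xv i.1)
      = ∑ i : {w : V // w ∈ Y}, xv i.1 * xu i.1 :=
    Finset.sum_congr rfl (fun i _ => mul_comm _ _)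
  rw [h1, h2] at h3
  rw [h4] at h3
  linarith

lemma single_ext {G : SimpleGraph V} {lam : ℝ} {Y : Finset V} {v : V}
    (hPY : Pfree G lam Y) (hv : v ∉ Y) {xv : V → ℝ}
    (hxv : IsExt G lam Y (ind v) xv) (hne : (adjM G).mulVec xv v ≠ lam) :
    Pfree G lam (insert v Y) := by
  intro z hsupp heig
  set t := z v with ht
  have hz : IsExt G lam Y (t • ind v) z := by
    constructor
    · intro i hi
      by_cases hiv : i = v
      · subst hiv; simp [ind_self, ht]
      · rw [hsupp i (by simp [hiv, hi])]; simp [ind_ne hiv]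
    · intro i hi; exact heig i (Finset.mem_insert_of_mem hi)
  have hz2 : IsExt G lam Y (t • ind v) (t • xv) := by
    constructor
    · intro i hi; simp [hxv.1 i hi]
    · intro i hi
      rw [Matrix.mulVec_smul]
      simp [hxv.2 i hi]; ring
  have hzeq : z = t • xv := ext_unique hPY hz hz2
  have ht0 : t = 0 := by
    by_contra ht0
    have := heig v (Finset.mem_insert_self v Y)
    rw [hzeq, Matrix.mulVec_smul] at this
    simp only [Pi.smul_apply, smul_eq_mul] at this
    have hxvv : xv v = 1 := by rw [hxv.1 v hv, ind_self]
    rw [hxvv, mul_one] at this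
    rw [mul_comm lam t] at this
    exact hne (mul_left_cancel₀ ht0 this)
  rw [hzeq, ht0, zero_smul]


lemma pair_ext {G : SimpleGraph V} {lam : ℝ} {Y : Finset V} {u v : V}
    (hPY : Pfree G lam Y) (huv : u ≠ v) (hu : u ∉ Y) (hv : v ∉ Y)
    {xu xv : V → ℝ}
    (hxu : IsExt G lam Y (ind u) xu) (hxv : IsExt G lam Y (ind v) xv)
    (hdet : ∀ a b : ℝ,
      a * ((adjM G).mulVec xu u - lam) + b * ((adjM G).mulVec xv u) = 0 →
      a * ((adjM G).mulVec xu v) + b * ((adjM G).mulVec xv v - lam) = 0 →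
      a = 0 ∧ b = 0) :
    Pfree G lam (insert u (insert v Y)) := by
  intro z hsupp heig
  set a := z u with ha
  set b := z v with hb
  have hz : IsExt G lam Y (a • ind u + b • ind v) z := by
    constructor
    · intro i hi
      simp only [Pi.add_apply, Pi.smul_apply, smul_eq_mul]
      by_cases hiu : i = u
      · subst hiu; rw [ind_self, ind_ne huv, mul_one, mul_zero, add_zero]
      · by_cases hiv : i = v
        · subst hiv; rw [ind_self, ind_ne (fun h => huv h.symm), mul_one, mul_zero, zero_add]
        · rw [hsupp i (by simp [hiu, hiv, hi]), ind_ne hiu, ind_ne hiv]; ring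
    · intro i hi
      exact heig i (Finset.mem_insert_of_mem (Finset.mem_insert_of_mem hi))
  have hz2 : IsExt G lam Y (a • ind u + b • ind v) (a • xu + b • xv) := by
    constructor
    · intro i hi
      simp [hxu.1 i hi, hxv.1 i hi]
    · intro i hi
      rw [Matrix.mulVec_add, Matrix.mulVec_smul, Matrix.mulVec_smul]
      simp only [Pi.add_apply, Pi.smul_apply, smul_eq_mul, hxu.2 i hi, hxv.2 i hi]
      ring
  have hzeq : z = a • xu + b • xv := ext_unique hPY hz hz2
  have hequ := heig u (Finset.mem_insert_self u _)
  have heqv := heig v (Finset.mem_insert_of_mem (Finset.mem_insert_self v Y))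
  rw [hzeq] at hequ heqv
  rw [Matrix.mulVec_add, Matrix.mulVec_smul, Matrix.mulVec_smul] at hequ heqv
  simp only [Pi.add_apply, Pi.smul_apply, smul_eq_mul] at hequ heqv
  have hxuu : xu u = 1 := by rw [hxu.1 u hu, ind_self]
  have hxuv : xu v = 0 := by rw [hxu.1 v hv, ind_ne (fun h => huv h.symm)]
  have hxvu : xv u = 0 := by rw [hxv.1 u hu, ind_ne huv]
  have hxvv : xv v = 1 := by rw [hxv.1 v hv, ind_self]
  rw [hxuu, hxvu, mul_one, mul_zero, add_zero] at hequ
  rw [hxuv, hxvv, mul_one, mul_zero, zero_add] at heqv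
  obtain ⟨ha0, hb0⟩ := hdet a b (by linarith) (by linarith)
  rw [hzeq, ha0, hb0, zero_smul, zero_smul, add_zero]

lemma nonadj_ext {G : SimpleGraph V} {lam : ℝ} {Y : Finset V} {w : V}
    (hw : w ∉ Y) (hnadj : ∀ y ∈ Y, ¬ G.Adj w y) :
    IsExt G lam Y (ind w) (ind w) := by
  refine ⟨fun v _ => rfl, ?_⟩
  intro i hi
  have h1 : (adjM G).mulVec (ind w) i = adjM G i w := by
    simp only [Matrix.mulVec, dotProduct]
    rw [Finset.sum_eq_single w]
    · rw [ind_self, mul_one]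
    · intro j _ hj; rw [ind_ne hj, mul_zero]
    · intro h; exact absurd (Finset.mem_univ w) h
  rw [h1, adjM_of_not_adj (fun h => hnadj i hi (G.adj_symm h))]
  rw [ind_ne (fun h : i = w => hw (h ▸ hi)), mul_zero]

lemma mulVec_ind {G : SimpleGraph V} {w u : V} :
    (adjM G).mulVec (ind w) u = adjM G u w := by
  simp only [Matrix.mulVec, dotProduct]
  rw [Finset.sum_eq_single w]
  · rw [ind_self, mul_one]
  · intro j _ hj; rw [ind_ne hj, mul_zero]
  · intro h; exact absurd (Finset.mem_univ w) h


lemma mem_eigker_iff (G : SimpleGraph V) (lam : ℝ) (x : V → ℝ) :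
    x ∈ LinearMap.ker (Matrix.toLin' (adjM G - lam • (1 : Matrix V V ℝ)))
      ↔ (adjM G).mulVec x = lam • x := by
  rw [LinearMap.mem_ker, Matrix.toLin'_apply, Matrix.sub_mulVec,
    Matrix.smul_mulVec, Matrix.one_mulVec, sub_eq_zero]

/-- restriction map to the complement of Y -/
noncomputable def restr (G : SimpleGraph V) (lam : ℝ) (Y : Finset V) :
    LinearMap.ker (Matrix.toLin' (adjM G - lam • (1 : Matrix V V ℝ)))
      →ₗ[ℝ] ({v : V // v ∉ Y} → ℝ) where
  toFun x := fun v => x.1 v.1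
  map_add' x y := rfl
  map_smul' c x := rfl

lemma restr_inj {G : SimpleGraph V} {lam : ℝ} {Y : Finset V} (hPY : Pfree G lam Y) :
    Function.Injective (restr G lam Y) := by
  rw [← LinearMap.ker_eq_bot, LinearMap.ker_eq_bot']
  intro x hx
  have hker := (mem_eigker_iff G lam x.1).1 x.2
  have : x.1 = 0 := by
    apply hPY
    · intro i hi
      exact congrFun hx ⟨i, hi⟩
    · intro i _
      rw [hker]; rfl
  exact Subtype.ext this

lemma eigMult_le {G : SimpleGraph V} {lam : ℝ} {Y : Finset V} (hPY : Pfree G lam Y) :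
    eigMult G lam ≤ Fintype.card {v : V // v ∉ Y} := by
  have := LinearMap.finrank_le_finrank_of_injective (restr_inj hPY)
  rwa [Module.finrank_fintype_fun_eq_card] at this

lemma eigMult_ge {G : SimpleGraph V} {lam : ℝ} {Y : Finset V}
    (xx : {v : V // v ∉ Y} → (V → ℝ))
    (hxx : ∀ v : {v : V // v ∉ Y}, IsExt G lam Y (ind v.1) (xx v))
    (hzero : ∀ (v u : {v : V // v ∉ Y}), (adjM G).mulVec (xx v) u.1 = lam * ind v.1 u.1) :
    Fintype.card {v : V // v ∉ Y} ≤ eigMult G lam := by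
  set K := LinearMap.ker (Matrix.toLin' (adjM G - lam • (1 : Matrix V V ℝ)))
  have hsurj : Function.Surjective (restr G lam Y) := by
    intro ζ
    set x : V → ℝ := ∑ v : {v : V // v ∉ Y}, ζ v • xx v with hxdef
    have hxval : ∀ u : {v : V // v ∉ Y}, x u.1 = ζ u := by
      intro u
      have : x u.1 = ∑ v : {v : V // v ∉ Y}, ζ v * (xx v) u.1 := by
        simp [hxdef, Finset.sum_apply]
      rw [this, Finset.sum_eq_single u]
      · rw [(hxx u).1 u.1 u.2, ind_self, mul_one]
      · intro v _ hvu
        rw [(hxx v).1 u.1 u.2, ind_ne (fun h => hvu (Subtype.ext h).symm), mul_zero]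
      · intro h; exact absurd (Finset.mem_univ u) h
    have hxker : x ∈ K := by
      rw [mem_eigker_iff]
      funext i
      have hmv : (adjM G).mulVec x i = ∑ v : {v : V // v ∉ Y}, ζ v * (adjM G).mulVec (xx v) i := by
        rw [hxdef]
        have e1 : ((adjM G).mulVec (∑ v : {v : V // v ∉ Y}, ζ v • xx v))
            = ∑ v : {v : V // v ∉ Y}, ζ v • (adjM G).mulVec (xx v) := by
          rw [← Matrix.mulVecLin_apply, map_sum]
          exact Finset.sum_congr rfl fun v _ => by
            rw [_root_.map_smul, Matrix.mulVecLin_apply]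
        rw [e1]
        simp [Finset.sum_apply]
      by_cases hi : i ∈ Y
      · rw [Pi.smul_apply, smul_eq_mul, hmv]
        have : ∀ v : {v : V // v ∉ Y}, ζ v * (adjM G).mulVec (xx v) i
            = lam * (ζ v * (xx v) i) := by
          intro v; rw [(hxx v).2 i hi]; ring
        rw [Finset.sum_congr rfl (fun v _ => this v), ← Finset.mul_sum]
        congr 1
        simp [hxdef, Finset.sum_apply]
      · rw [Pi.smul_apply, smul_eq_mul, hmv]
        have : ∀ v : {v : V // v ∉ Y}, ζ v * (adjM G).mulVec (xx v) i
            = lam * (ζ v * ind v.1 i) := by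
          intro v; rw [hzero v ⟨i, hi⟩]; ring
        rw [Finset.sum_congr rfl (fun v _ => this v), ← Finset.mul_sum]
        congr 1
        have : x i = ζ ⟨i, hi⟩ := hxval ⟨i, hi⟩
        rw [this, Finset.sum_eq_single (⟨i, hi⟩ : {v : V // v ∉ Y})]
        · rw [ind_self, mul_one]
        · intro v _ hv
          rw [ind_ne (fun h : i = v.1 => hv (Subtype.ext h.symm)), mul_zero]
        · intro h; exact absurd (Finset.mem_univ _) h
    exact ⟨⟨x, hxker⟩, funext fun u => hxval u⟩
  have h1 : Fintype.card {v : V // v ∉ Y}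
      = Module.finrank ℝ (LinearMap.range (restr G lam Y)) := by
    rw [LinearMap.range_eq_top.2 hsurj]
    rw [finrank_top, Module.finrank_fintype_fun_eq_card]
  rw [h1]
  exact (LinearMap.finrank_range_le _)


lemma insert_connected {G : SimpleGraph V} {Y : Finset V}
    (hY : (G.induce (↑Y : Set V)).Connected) {v y : V} (hy : y ∈ Y)
    (hadj : G.Adj v y) : (G.induce (↑(insert v Y) : Set V)).Connected := by
  have h1 := SimpleGraph.induce_pair_connected_of_adj (G := G) hadj
  have h2 := SimpleGraph.induce_union_connected h1.preconnected hY.preconnected ⟨y, by simp, by simp [hy]⟩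
  have hset : ({v, y} ∪ (↑Y : Set V)) = (↑(insert v Y) : Set V) := by
    ext z; simp only [Set.mem_union, Set.mem_insert_iff, Set.mem_singleton_iff,
      Finset.coe_insert, Finset.mem_coe]
    constructor
    · rintro ((rfl | rfl) | hz)
      · exact Or.inl rfl
      · exact Or.inr hy
      · exact Or.inr hz
    · rintro (rfl | hz)
      · exact Or.inl (Or.inl rfl)
      · exact Or.inr hz
  rwa [hset] at h2

lemma frontier_walk {G : SimpleGraph V} {Y : Finset V} :
    ∀ {a c : V} (_ : G.Walk a c), c ∈ Y → (a ∉ Y ∧ ∀ y ∈ Y, ¬ G.Adj a y) →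
    ∃ w u : V, (w ∉ Y ∧ ∀ y ∈ Y, ¬ G.Adj w y) ∧ (u ∉ Y ∧ ∃ y ∈ Y, G.Adj u y) ∧
      G.Adj w u := by
  intro a c p
  induction p with
  | nil => exact fun hy h => absurd hy h.1
  | @cons a b c hadj q ih =>
    intro hy ha
    by_cases hbY : b ∈ Y
    · exact absurd hadj (ha.2 b hbY)
    · by_cases hbN : ∃ y ∈ Y, G.Adj b y
      · exact ⟨a, b, ha, ⟨hbY, hbN⟩, hadj⟩
      · exact ih hy ⟨hbY, fun y hyy hadj' => hbN ⟨y, hyy, hadj'⟩⟩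

lemma frontier_pair {G : SimpleGraph V} (hG : G.Connected) {Y : Finset V}
    (hYne : Y.Nonempty) {w₀ : V} (hw₀ : w₀ ∉ Y ∧ ∀ y ∈ Y, ¬ G.Adj w₀ y) :
    ∃ w u : V, (w ∉ Y ∧ ∀ y ∈ Y, ¬ G.Adj w y) ∧ (u ∉ Y ∧ ∃ y ∈ Y, G.Adj u y) ∧
      G.Adj w u := by
  obtain ⟨y₀, hy₀⟩ := hYne
  exact frontier_walk ((hG.preconnected w₀ y₀).some) hy₀ hw₀


end StarComplAux

theorem stmt_14 (G : SimpleGraph V) (hG : G.Connected) (lam : ℝ)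
    (heig : 0 < eigMult G lam) (s : Finset V)
    (hKconn : (G.induce (↑s : Set V)).Connected)
    (hKnotEig : ∀ α : {v : V // v ∈ s} → ℝ,
      (Matrix.of fun i j : {v : V // v ∈ s} => adjM G i.1 j.1).mulVec α = lam • α → α = 0) :
    ∃ X : Finset V, IsStarSet G lam X ∧ (∀ v ∈ s, v ∉ X) ∧
      (G.induce {v : V | v ∉ X}).Connected := by
  classical
  have hPs : Pfree G lam s :=
    (Pfree_iff_pred G lam s (fun v => v ∈ s) (instF := Finset.Subtype.fintype s) (fun _ => Iff.rfl)).2 hKnotEig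
  -- choose a maximal good set
  set good : Finset V → Prop :=
    fun Z => s ⊆ Z ∧ (G.induce (↑Z : Set V)).Connected ∧ Pfree G lam Z with hgood
  have hgs : good s := ⟨subset_rfl, hKconn, hPs⟩
  set S : Set ℕ := {k | ∃ Z : Finset V, good Z ∧ Z.card = k} with hS
  have hSne : S.Nonempty := ⟨s.card, s, hgs, rfl⟩
  have hSbdd : BddAbove S := by
    refine ⟨Fintype.card V, ?_⟩
    rintro k ⟨Z, _, rfl⟩
    simpa using Z.card_le_univ
  obtain ⟨Y, hYgood, hYcard⟩ := Nat.sSup_mem hSne hSbdd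
  have hmax : ∀ Z : Finset V, good Z → Z.card ≤ Y.card := by
    intro Z hZ
    rw [hYcard]
    exact le_csSup hSbdd ⟨Z, hZ, rfl⟩
  obtain ⟨hsY, hYconn, hPY⟩ := hYgood
  have hnogood : ∀ Z : Finset V, Y ⊂ Z → ¬ good Z := by
    intro Z hYZ hg
    exact absurd (hmax Z hg) (not_le.2 (Finset.card_lt_card hYZ))
  have hYne : Y.Nonempty := by
    obtain ⟨⟨v₀, hv₀⟩⟩ := hKconn.nonempty
    exact ⟨v₀, hsY hv₀⟩
  -- extensions
  choose xx hxx using fun v : {v : V // v ∉ Y} => ext_exists hPY (ind v.1)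
  -- diagonal entries vanish for vertices adjacent to Y
  have hdiag : ∀ u : {v : V // v ∉ Y}, (∃ y ∈ Y, G.Adj u.1 y) →
      (adjM G).mulVec (xx u) u.1 = lam := by
    rintro u ⟨y, hy, hadj⟩
    by_contra hne
    refine hnogood (insert u.1 Y) (Finset.ssubset_insert u.2) ?_
    exact ⟨hsY.trans (Finset.subset_insert _ _), insert_connected hYconn hy hadj,
      single_ext hPY u.2 (hxx u) hne⟩
  by_cases hA : ∃ w : V, w ∉ Y ∧ ∀ y ∈ Y, ¬ G.Adj w y
  · -- some vertex outside Y with no neighbour in Y : contradiction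
    exfalso
    obtain ⟨w₀, hw₀⟩ := hA
    obtain ⟨w, u, hw, hu, hadj⟩ := frontier_pair hG hYne hw₀
    obtain ⟨y, hy, huy⟩ := hu.2
    have hxu := hxx ⟨u, hu.1⟩
    have hxw : IsExt G lam Y (ind w) (ind w) := nonadj_ext hw.1 hw.2
    have hAuw : (adjM G).mulVec (ind w) u = 1 := by
      rw [mulVec_ind, adjM_of_adj hadj.symm]
    have hAww : (adjM G).mulVec (ind w) w = 0 := by
      rw [mulVec_ind, adjM_of_not_adj (G.loopless.irrefl w)]
    have hDuu : (adjM G).mulVec (xx ⟨u, hu.1⟩) u = lam := hdiag ⟨u, hu.1⟩ ⟨y, hy, huy⟩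
    have hDuw : (adjM G).mulVec (xx ⟨u, hu.1⟩) w = 1 := by
      rw [← ext_symm hu.1 hw.1 hxu hxw, hAuw]
    have hPnew : Pfree G lam (insert u (insert w Y)) := by
      refine pair_ext hPY (fun h => (G.loopless.irrefl u) (h ▸ hadj.symm) : u ≠ w) hu.1 hw.1 hxu hxw ?_
      intro a b h1 h2
      rw [hDuu, sub_self, mul_zero, zero_add, hAuw, mul_one] at h1
      rw [hDuw, mul_one, hAww, zero_sub, h1] at h2
      exact ⟨by linarith, h1⟩
    refine hnogood (insert u (insert w Y)) ?_ ?_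
    · refine (Finset.ssubset_iff_of_subset ?_).2 ⟨w, ?_, hw.1⟩
      · exact (Finset.subset_insert _ _).trans (Finset.subset_insert _ _)
      · exact Finset.mem_insert_of_mem (Finset.mem_insert_self _ _)
    · refine ⟨hsY.trans ((Finset.subset_insert _ _).trans (Finset.subset_insert _ _)), ?_, hPnew⟩
      rw [Finset.insert_comm]
      have h1 : (G.induce (↑(insert u Y) : Set V)).Connected :=
        insert_connected hYconn hy huy
      exact insert_connected h1 (Finset.mem_insert_self u Y) hadj
  · -- every vertex outside Y has a neighbour in Y
    push_neg at hA
    have hdiag' : ∀ u : {v : V // v ∉ Y}, (adjM G).mulVec (xx u) u.1 = lam := by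
      intro u
      obtain ⟨y, hy, hadj⟩ := hA u.1 u.2
      exact hdiag u ⟨y, hy, hadj⟩
    have hoff : ∀ u v : {v : V // v ∉ Y}, u ≠ v → (adjM G).mulVec (xx v) u.1 = 0 := by
      intro u v huv
      by_contra hne
      have hVne : u.1 ≠ v.1 := fun h => huv (Subtype.ext h)
      have hsym : (adjM G).mulVec (xx u) v.1 = (adjM G).mulVec (xx v) u.1 :=
        (ext_symm u.2 v.2 (hxx u) (hxx v)).symm
      have hPnew : Pfree G lam (insert u.1 (insert v.1 Y)) := by
        refine pair_ext hPY hVne u.2 v.2 (hxx u) (hxx v) ?_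
        intro a b h1 h2
        rw [hdiag' u, sub_self, mul_zero, zero_add] at h1
        rw [hdiag' v, sub_self, mul_zero, add_zero, hsym] at h2
        have hb : b = 0 := by
          rcases mul_eq_zero.1 h1 with h | h
          · exact h
          · exact absurd h hne
        have ha : a = 0 := by
          rcases mul_eq_zero.1 h2 with h | h
          · exact h
          · exact absurd h hne
        exact ⟨ha, hb⟩
      refine hnogood (insert u.1 (insert v.1 Y)) ?_ ?_
      · refine (Finset.ssubset_iff_of_subset ?_).2 ⟨v.1, ?_, v.2⟩
        · exact (Finset.subset_insert _ _).trans (Finset.subset_insert _ _)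
        · exact Finset.mem_insert_of_mem (Finset.mem_insert_self _ _)
      · refine ⟨hsY.trans ((Finset.subset_insert _ _).trans (Finset.subset_insert _ _)), ?_, hPnew⟩
        obtain ⟨yv, hyv, hadjv⟩ := hA v.1 v.2
        obtain ⟨yu, hyu, hadju⟩ := hA u.1 u.2
        have h1 : (G.induce (↑(insert v.1 Y) : Set V)).Connected :=
          insert_connected hYconn hyv hadjv
        exact insert_connected h1 (Finset.mem_insert_of_mem hyu) hadju
    have hzero : ∀ v u : {v : V // v ∉ Y},
        (adjM G).mulVec (xx v) u.1 = lam * ind v.1 u.1 := by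
      intro v u
      by_cases h : u = v
      · subst h
        rw [hdiag' u, ind_self, mul_one]
      · rw [hoff u v h, ind_ne (fun hh : u.1 = v.1 => h (Subtype.ext hh)), mul_zero]
    have heqcard : eigMult G lam = Fintype.card {v : V // v ∉ Y} :=
      le_antisymm (eigMult_le hPY) (eigMult_ge xx hxx hzero)
    refine ⟨Yᶜ, ⟨heig, ?_, ?_⟩, ?_, ?_⟩
    · rw [heqcard]
      rw [Fintype.card_subtype]
      congr 1
      ext v
      simp
    · have := (Pfree_iff_pred G lam Y (fun v => v ∉ Yᶜ) (fun v => by simp)).1 hPY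
      exact this
    · intro v hv
      simp only [Finset.mem_compl, not_not]
      exact hsY hv
    · have hset : {v : V | v ∉ Yᶜ} = (↑Y : Set V) := by
        ext v; simp
      rw [hset]
      exact hYconn
end
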